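/- Let L(M) for M near 0 be defined implicitly by Q(1, L, M) = 0 with L(0) = 0 (the branch with L(M) → 0 as M → 0). Then lim_{M→0} L(M)²/M = 0 and lim_{M→0} d/dM (L(M)²/M) = 1. -/

import Mathlib

open Filter

/-- The sextic polynomial Q(K,L,M) from the Einstein-Dirac classification. -/
noncomputable def Q (K L M : ℝ) : ℝ :=
  -K^2*L*(L-M)^2*M + L^3*M^3 + K*L^2*M^2*(M-L) + K^3*(L-M)*(L+M)^2

/-- Q(1, gm, m) / m^3 as a polynomial in (g, m). -/
def Pg (g m : ℝ) : ℝ := g^3*(m-1)^2*(m+1) + g^2*(1+m)^2 - g*(1+m) - 1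

/-- ∂Q/∂L at K = 1. -/
def QLp (l m : ℝ) : ℝ :=
  3*l^2*(1 - m - m^2 + m^3) + 2*l*(m + 2*m^2 + m^3) - (m^2 + m^3)

/-- ∂Q/∂M at K = 1. -/
def QMp (l m : ℝ) : ℝ :=
  l^3*(-1 - 2*m + 3*m^2) + l^2*(1 + 4*m + 3*m^2) - l*(2*m + 3*m^2) - 3*m^2

/-- QLp(gm,m)/m² -/
def aA (g m : ℝ) : ℝ := 3*g^2*(1 - m - m^2 + m^3) + 2*g*(1 + 2*m + m^2) - (1 + m)

/-- -QMp(gm,m)/m² -/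
def bB (g m : ℝ) : ℝ := -(g^3*m*(-1 - 2*m + 3*m^2) + g^2*(1 + 4*m + 3*m^2) - g*(2 + 3*m) - 3)

lemma Pg_neg (M h : ℝ) (hM1 : -(1/10) < M) (hM0 : M < 0) (hh : |h| < 1/10) :
    Pg (h - 1) M < 0 := by
  rw [abs_lt] at hh
  obtain ⟨ha, hb⟩ := hh
  have hexp : Pg (h - 1) M =
      4*M+2*M^2-M^3 + h*(-8*M-5*M^2+3*M^3) + h^2*(-2+5*M+4*M^2-3*M^3)
        + h^3*(1-M-M^2+M^3) := by
    simp only [Pg]; ring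
  rw [hexp]
  have e1 : 2*M^2 - M^3 ≤ (21/100)*(-M) := by nlinarith
  have e2 : h*(-8*M-5*M^2+3*M^3) ≤ (86/100)*(-M) := by
    nlinarith [mul_pos (neg_pos.mpr hM0) (neg_pos.mpr hM0), sq_nonneg (h+1/10), sq_nonneg (h-1/10)]
  have e3 : h^2*(-2+5*M+4*M^2-3*M^3) ≤ -(19/10)*h^2 := by
    nlinarith [sq_nonneg h, sq_nonneg (h*M)]
  have e4 : h^3*(1-M-M^2+M^3) ≤ (12/100)*h^2 := by
    nlinarith [sq_nonneg h, sq_nonneg (h*M), sq_nonneg (h + 1/10), sq_nonneg (h-1/10)]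
  nlinarith [sq_nonneg h]


lemma tendsto_Pg {f g : ℝ → ℝ} {lf : Filter ℝ} {a b : ℝ}
    (hf : Tendsto f lf (nhds a)) (hg : Tendsto g lf (nhds b)) :
    Tendsto (fun x => Pg (f x) (g x)) lf (nhds (Pg a b)) := by
  have h1 : Tendsto (fun _ : ℝ => (1:ℝ)) lf (nhds 1) := tendsto_const_nhds
  unfold Pg
  exact ((((((hf.pow 3).mul ((hg.sub h1).pow 2)).mul (hg.add h1)).add
    ((hf.pow 2).mul ((h1.add hg).pow 2))).sub (hf.mul (h1.add hg))).sub h1)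

lemma tendsto_aA {f g : ℝ → ℝ} {lf : Filter ℝ} {a b : ℝ}
    (hf : Tendsto f lf (nhds a)) (hg : Tendsto g lf (nhds b)) :
    Tendsto (fun x => aA (f x) (g x)) lf (nhds (aA a b)) := by
  have h1 : Tendsto (fun _ : ℝ => (1:ℝ)) lf (nhds 1) := tendsto_const_nhds
  unfold aA
  exact ((((hf.pow 2).const_mul 3).mul (((h1.sub hg).sub (hg.pow 2)).add (hg.pow 3))).add
    ((hf.const_mul 2).mul ((h1.add (hg.const_mul 2)).add (hg.pow 2)))).sub (h1.add hg)

lemma tendsto_bB {f g : ℝ → ℝ} {lf : Filter ℝ} {a b : ℝ}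
    (hf : Tendsto f lf (nhds a)) (hg : Tendsto g lf (nhds b)) :
    Tendsto (fun x => bB (f x) (g x)) lf (nhds (bB a b)) := by
  have h1 : Tendsto (fun _ : ℝ => (-1:ℝ)) lf (nhds (-1)) := tendsto_const_nhds
  have h2 : Tendsto (fun _ : ℝ => (2:ℝ)) lf (nhds 2) := tendsto_const_nhds
  have h3 : Tendsto (fun _ : ℝ => (3:ℝ)) lf (nhds 3) := tendsto_const_nhds
  have h4 : Tendsto (fun _ : ℝ => (1:ℝ)) lf (nhds 1) := tendsto_const_nhds
  unfold bB
  exact (((((((hf.pow 3).mul hg).mul ((h1.sub (hg.const_mul 2)).add ((hg.pow 2).const_mul 3))).add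
    ((hf.pow 2).mul ((h4.add (hg.const_mul 4)).add ((hg.pow 2).const_mul 3)))).sub
    (hf.mul (h2.add (hg.const_mul 3)))).sub h3)).neg

set_option maxHeartbeats 1000000 in
theorem stmt_15 (L : ℝ → ℝ)
    (hdiff : ∀ᶠ M in nhds (0 : ℝ), DifferentiableAt ℝ L M)
    (heq : ∀ᶠ M in nhds (0 : ℝ), Q 1 (L M) M = 0)
    (h0 : L 0 = 0)
    (hfin : ∃ c : ℝ, Tendsto (fun M => L M / M) (nhdsWithin 0 {(0:ℝ)}ᶜ) (nhds c)) :
    Tendsto (fun M => (L M)^2 / M) (nhdsWithin 0 {(0:ℝ)}ᶜ) (nhds 0) ∧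
    Tendsto (deriv fun M => (L M)^2 / M) (nhdsWithin 0 {(0:ℝ)}ᶜ) (nhds 1) := by
  obtain ⟨c, hg⟩ := hfin
  set l : Filter ℝ := nhdsWithin 0 {(0:ℝ)}ᶜ with hldef
  have hne : ∀ᶠ M in l, M ≠ 0 := by
    have := self_mem_nhdsWithin (a := (0:ℝ)) (s := {(0:ℝ)}ᶜ)
    filter_upwards [this] with x hx
    simpa using hx
  have hM : Tendsto (fun M : ℝ => M) l (nhds 0) := tendsto_id.mono_left nhdsWithin_le_nhds
  have heq' : ∀ᶠ M in l, Q 1 (L M) M = 0 := heq.filter_mono nhdsWithin_le_nhds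
  -- The rescaled equation
  have hPg0 : ∀ᶠ M in l, Pg (L M / M) M = 0 := by
    filter_upwards [heq', hne] with M hQ hM0
    have key : M^3 * Pg (L M / M) M = Q 1 (L M) M := by
      simp only [Pg, Q]; field_simp; ring
    have : M^3 * Pg (L M / M) M = 0 := by rw [key, hQ]
    rcases mul_eq_zero.mp this with h | h
    · exact absurd (pow_eq_zero_iff (by norm_num) |>.mp h) hM0
    · exact h
  -- limit of Pg along the branch
  have hPgc : Tendsto (fun M => Pg (L M / M) M) l (nhds (Pg c 0)) :=
    tendsto_Pg hg hM
  have hPg0' : Tendsto (fun M => Pg (L M / M) M) l (nhds 0) :=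
    Tendsto.congr' (hPg0.mono fun x h => h.symm) tendsto_const_nhds
  have hc0 : Pg c 0 = 0 := tendsto_nhds_unique hPgc hPg0'
  have hcpoly : (c - 1) * (c + 1)^2 = 0 := by
    simp only [Pg] at hc0; linear_combination hc0
  -- rule out c = -1
  have hc1 : c = 1 := by
    rcases mul_eq_zero.mp hcpoly with h | h
    · linarith [sub_eq_zero.mp h]
    · exfalso
      have hcm1 : c = -1 := by
        have := pow_eq_zero_iff (n := 2) (by norm_num) |>.mp h
        linarith
      subst hcm1
      have hsh : Tendsto (fun M => L M / M + 1) l (nhds 0) := by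
        have := hg.add (tendsto_const_nhds (x := (1:ℝ)))
        simpa using this
      have habs : ∀ᶠ M in l, |L M / M + 1| < 1/10 := by
        have := Metric.tendsto_nhds.mp hsh (1/10) (by norm_num)
        filter_upwards [this] with x hx
        simpa [Real.dist_eq] using hx
      have hle : nhdsWithin (0:ℝ) (Set.Iio 0) ≤ l := by
        apply nhdsWithin_mono
        intro x hx
        simpa using ne_of_lt hx
      have hev : ∀ᶠ M in nhdsWithin (0:ℝ) (Set.Iio 0),
          Pg (L M / M) M = 0 ∧ |L M / M + 1| < 1/10 ∧ M < 0 ∧ -(1/10) < M := by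
        have h1 := hPg0.filter_mono hle
        have h2 := habs.filter_mono hle
        have h3 : ∀ᶠ M in nhdsWithin (0:ℝ) (Set.Iio 0), M < 0 := by
          filter_upwards [self_mem_nhdsWithin] with x hx; exact hx
        have h4 : ∀ᶠ M in nhdsWithin (0:ℝ) (Set.Iio 0), -(1/10) < M :=
          (eventually_gt_nhds (by norm_num)).filter_mono nhdsWithin_le_nhds
        filter_upwards [h1, h2, h3, h4] with M a b cc d; exact ⟨a, b, cc, d⟩
      obtain ⟨M, hP, hA, hMn, hMb⟩ := hev.exists
      have hrw : L M / M = (L M / M + 1) - 1 := by ring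
      have := Pg_neg M (L M / M + 1) hMb hMn hA
      rw [← hrw] at this
      linarith [hP, this]
  subst hc1
  -- implicit differentiation: QLp * L' + QMp = 0 eventually near 0
  have hderiv0 : ∀ᶠ M in nhds (0:ℝ), QLp (L M) M * deriv L M + QMp (L M) M = 0 := by
    filter_upwards [hdiff, heq.eventually_nhds] with M hdM hq
    have hL : HasDerivAt L (deriv L M) M := hdM.hasDerivAt
    have hid : HasDerivAt (fun x : ℝ => x) 1 M := hasDerivAt_id' M
    have hp1 : HasDerivAt (fun x : ℝ => 1 - x - x^2 + x^3) (-1 - 2*M + 3*M^2) M := by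
      have h := (((hasDerivAt_const M (1:ℝ)).sub hid).sub (hasDerivAt_pow 2 M)).add
        (hasDerivAt_pow 3 M)
      exact h.congr_deriv (by push_cast; ring)
    have hp2 : HasDerivAt (fun x : ℝ => x + 2*x^2 + x^3) (1 + 4*M + 3*M^2) M := by
      have h := (hid.add ((hasDerivAt_pow 2 M).const_mul 2)).add (hasDerivAt_pow 3 M)
      exact h.congr_deriv (by push_cast; ring)
    have hp3 : HasDerivAt (fun x : ℝ => x^2 + x^3) (2*M + 3*M^2) M := by
      have h := (hasDerivAt_pow 2 M).add (hasDerivAt_pow 3 M)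
      exact h.congr_deriv (by push_cast; ring)
    have hp4 : HasDerivAt (fun x : ℝ => x^3) (3*M^2) M := by
      have h := hasDerivAt_pow 3 M
      exact h.congr_deriv (by push_cast; ring)
    have hL3 : HasDerivAt (fun x => (L x)^3) (3*(L M)^2*deriv L M) M := by
      have h := hL.pow 3
      exact h.congr_deriv (by push_cast; ring)
    have hL2 : HasDerivAt (fun x => (L x)^2) (2*(L M)*deriv L M) M := by
      have h := hL.pow 2
      exact h.congr_deriv (by push_cast; ring)
    have hF : HasDerivAt
        (fun x => (L x)^3*(1 - x - x^2 + x^3) + (L x)^2*(x + 2*x^2 + x^3)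
          - (L x)*(x^2 + x^3) - x^3)
        (QLp (L M) M * deriv L M + QMp (L M) M) M := by
      have h := (((hL3.mul hp1).add (hL2.mul hp2)).sub (hL.mul hp3)).sub hp4
      exact h.congr_deriv (by simp only [QLp, QMp]; ring)
    have hFeq : (fun x => Q 1 (L x) x) =
        fun x => (L x)^3*(1 - x - x^2 + x^3) + (L x)^2*(x + 2*x^2 + x^3)
          - (L x)*(x^2 + x^3) - x^3 := by
      funext x; simp only [Q]; ring
    have hF' : HasDerivAt (fun x => Q 1 (L x) x)
        (QLp (L M) M * deriv L M + QMp (L M) M) M := hFeq ▸ hF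
    have hzero : HasDerivAt (fun x => Q 1 (L x) x) 0 M :=
      (hasDerivAt_const M (0:ℝ)).congr_of_eventuallyEq hq
    exact hF'.unique hzero
  -- limits of aA and bB
  have ha : Tendsto (fun M => aA (L M / M) M) l (nhds 4) := by
    have h := tendsto_aA hg hM
    have e : aA 1 0 = 4 := by norm_num [aA]
    rwa [e] at h
  have hb : Tendsto (fun M => bB (L M / M) M) l (nhds 4) := by
    have h := tendsto_bB hg hM
    have e : bB 1 0 = 4 := by norm_num [bB]
    rwa [e] at h
  have haz : ∀ᶠ M in l, aA (L M / M) M ≠ 0 := ha.eventually_ne (by norm_num)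
  -- solve for deriv L
  have hL'eq : ∀ᶠ M in l, deriv L M = bB (L M / M) M / aA (L M / M) M := by
    filter_upwards [hne, hderiv0.filter_mono nhdsWithin_le_nhds, haz] with M hM0 hD ha0
    have hQLa : QLp (L M) M = M^2 * aA (L M / M) M := by
      simp only [QLp, aA]; field_simp
    have hQMb : QMp (L M) M = -(M^2 * bB (L M / M) M) := by
      simp only [QMp, bB]; field_simp
    rw [hQLa, hQMb] at hD
    have hfac : M^2 * (aA (L M / M) M * deriv L M - bB (L M / M) M) = 0 := by
      linear_combination hD
    rcases mul_eq_zero.mp hfac with h | h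
    · exact absurd (pow_eq_zero_iff (by norm_num) |>.mp h) hM0
    · rw [eq_div_iff ha0]
      linarith [sub_eq_zero.mp h]
  have hL' : Tendsto (deriv L) l (nhds 1) := by
    have hdivt : Tendsto (fun M => bB (L M / M) M / aA (L M / M) M) l (nhds 1) := by
      have := hb.div ha (by norm_num)
      norm_num at this
      exact this
    exact Tendsto.congr' (hL'eq.mono fun x h => h.symm) hdivt
  constructor
  · -- first limit
    have h1ev : ∀ᶠ M in l, (L M / M)^2 * M = (L M)^2 / M := by
      filter_upwards [hne] with M hM0
      field_simp
    have := (hg.pow 2).mul hM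
    norm_num at this
    exact Tendsto.congr' h1ev this
  · -- second limit
    have hder2 : ∀ᶠ M in l, 2*(L M / M)*deriv L M - (L M / M)^2
        = deriv (fun x => (L x)^2 / x) M := by
      filter_upwards [hne, hdiff.filter_mono nhdsWithin_le_nhds] with M hM0 hdM
      have hL : HasDerivAt L (deriv L M) M := hdM.hasDerivAt
      have hid : HasDerivAt (fun x : ℝ => x) 1 M := hasDerivAt_id' M
      have hL2 : HasDerivAt (fun x => (L x)^2) (2*(L M)*deriv L M) M := by
        have h := hL.pow 2
        exact h.congr_deriv (by push_cast; ring)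
      have h : HasDerivAt (fun x => (L x)^2 / x) _ M := hL2.div hid hM0
      rw [h.deriv]
      field_simp
    have htend2 : Tendsto (fun M => 2*(L M / M)*deriv L M - (L M / M)^2) l (nhds 1) := by
      have := ((hg.const_mul 2).mul hL').sub (hg.pow 2)
      norm_num at this
      exact this
    exact Tendsto.congr' hder2 htend2
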